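/- Let d ≥ 2, λ > 0 and let k ≥ 1 be an integer. There exists a constant C_d > 0 depending only on d with the following property. Let g : (𝕋^d × ℝ^d)^{k+1} → ℝ be measurable and satisfy |g(Z_{k+1})| ≤ M exp(−λ H_{k+1}(V_{k+1})) for some M ≥ 0, where H_m(V_m) := (1/2) Σ_{i=1}^{m} |v_i|². Then for every Z_k = (x₁,v₁,…,x_k,v_k) ∈ (𝕋^d × ℝ^d)^k, the quantity (|C^0_{k,k+1}| g)(Z_k) := Σ_{i=1}^{k} ∫_{S^{d−1}} ∫_{ℝ^d} [ |g(…, x_i, v_i^*, …, x_i, v_{k+1}^*)| ((v_{k+1} − v_i)·ν)_+ + |g(…, x_i, v_i, …, x_i, v_{k+1})| ((v_{k+1} − v_i)·ν)_− ] dv_{k+1} dσ(ν), where v_i^* := v_i + (ν·(v_{k+1} − v_i)) ν and v_{k+1}^* := v_{k+1} − (ν·(v_{k+1} − v_i)) ν, satisfies (|C^0_{k,k+1}| g)(Z_k) ≤ C_d λ^{−d/2} ( k λ^{−1/2} + Σ_{i=1}^{k} |v_i| ) exp(−λ H_k(V_k)) M. -/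

import Mathlib

open MeasureTheory Real

noncomputable section

/-- The unit torus `(ℝ/ℤ)^d`. -/
abbrev Torus (d : ℕ) := Fin d → AddCircle (1 : ℝ)

/-- Euclidean space `ℝ^d` (velocity space). -/
abbrev Vel (d : ℕ) := EuclideanSpace ℝ (Fin d)

/-- Kinetic energy `H_m(V_m) = (1/2) ∑ |v_i|²` of a configuration `Z_m`. -/
noncomputable def kineticEnergy {d m : ℕ} (Z : Fin m → Torus d × Vel d) : ℝ :=
  (1 / 2) * ∑ i, ‖(Z i).2‖ ^ 2

/-- From `Z_k`, replace the velocity of the `i`-th particle by `w` and append a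
`(k+1)`-st particle at position `x_i` with velocity `v`:
this is the configuration `(…, x_i, w, …, x_i, v)`. -/
noncomputable def adjoin {d k : ℕ} (Z : Fin k → Torus d × Vel d) (i : Fin k)
    (w v : Vel d) : Fin (k + 1) → Torus d × Vel d :=
  Fin.snoc (Function.update Z i ((Z i).1, w)) ((Z i).1, v)

lemma kE_adjoin {d k : ℕ} (Z : Fin k → Torus d × Vel d) (i : Fin k) (w v : Vel d) :
    kineticEnergy (adjoin Z i w v)
      = kineticEnergy Z - ‖(Z i).2‖ ^ 2 / 2 + ‖w‖ ^ 2 / 2 + ‖v‖ ^ 2 / 2 := by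
  simp only [kineticEnergy, adjoin]
  rw [Fin.sum_univ_castSucc]
  simp only [Fin.snoc_castSucc, Fin.snoc_last]
  have h1 : (fun j => ‖(Function.update Z i ((Z i).1, w) j).2‖ ^ 2)
      = Function.update (fun j => ‖(Z j).2‖ ^ 2) i (‖w‖ ^ 2) := by
    funext j
    rcases eq_or_ne j i with h | h
    · subst h; simp
    · simp [Function.update_of_ne h]
  have h2 : ∑ j : Fin k, ‖(Function.update Z i ((Z i).1, w) j).2‖ ^ 2
      = ∑ j : Fin k, Function.update (fun j => ‖(Z j).2‖ ^ 2) i (‖w‖ ^ 2) j := by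
    rw [h1]
  rw [h2, Finset.sum_update_of_mem (Finset.mem_univ i),
    Finset.sum_sdiff_eq_sub (Finset.singleton_subset_iff.mpr (Finset.mem_univ i)),
    Finset.sum_singleton]
  ring

lemma energy_conservation {d : ℕ} (u w ν : Vel d) (hν : ‖ν‖ = 1) :
    ‖u + (inner ℝ ν (w - u) : ℝ) • ν‖ ^ 2 + ‖w - (inner ℝ ν (w - u) : ℝ) • ν‖ ^ 2
      = ‖u‖ ^ 2 + ‖w‖ ^ 2 := by
  set t : ℝ := inner ℝ ν (w - u) with hts
  have ht : t = (inner ℝ w ν : ℝ) - (inner ℝ u ν : ℝ) := by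
    rw [hts, inner_sub_right, real_inner_comm ν w, real_inner_comm ν u]
  have e1 : ‖u + t • ν‖ ^ 2 = ‖u‖ ^ 2 + 2 * (t * (inner ℝ u ν : ℝ)) + t ^ 2 := by
    rw [norm_add_sq_real, real_inner_smul_right, norm_smul]
    simp [hν, mul_pow, sq_abs]
  have e2 : ‖w - t • ν‖ ^ 2 = ‖w‖ ^ 2 - 2 * (t * (inner ℝ w ν : ℝ)) + t ^ 2 := by
    rw [norm_sub_sq_real, real_inner_smul_right, norm_smul]
    simp [hν, mul_pow, sq_abs]
  rw [e1, e2, ht]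
  ring

lemma gauss_integrable {d : ℕ} {b : ℝ} (hb : 0 < b) :
    Integrable (fun w : Vel d => Real.exp (-b * ‖w‖ ^ 2)) := by
  have h := (GaussianFourier.integrable_cexp_neg_mul_sq_norm_add (V := Vel d)
    (b := (b : ℂ)) (by simpa using hb) 0 0).norm
  refine h.congr (Filter.Eventually.of_forall fun v => ?_)
  simp only [Complex.norm_exp]
  congr 1
  simp only [Complex.add_re, Complex.mul_re, Complex.neg_re, Complex.ofReal_re,
    Complex.neg_im, Complex.ofReal_im, Complex.zero_re, Complex.zero_im]
  norm_cast
  simp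

lemma gauss_value {d : ℕ} {b : ℝ} (hb : 0 < b) :
    ∫ w : Vel d, Real.exp (-b * ‖w‖ ^ 2) = (π / b) ^ ((d : ℝ) / 2) := by
  rw [GaussianFourier.integral_rexp_neg_mul_sq_norm hb]
  simp

lemma xexp_bound {lam : ℝ} (hlam : 0 < lam) {x : ℝ} (hx : 0 ≤ x) :
    x * Real.exp (-(lam / 4) * x ^ 2) ≤ 2 * lam ^ (-(1 : ℝ) / 2) := by
  have hb : (0 : ℝ) ≤ 2 * lam ^ (-(1 : ℝ) / 2) := by positivity
  have ha : 0 ≤ x * Real.exp (-(lam / 4) * x ^ 2) := by positivity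
  have hsq : (x * Real.exp (-(lam / 4) * x ^ 2)) ^ 2 ≤ (2 * lam ^ (-(1 : ℝ) / 2)) ^ 2 := by
    have h1 : (2 * lam ^ (-(1 : ℝ) / 2)) ^ 2 = 4 / lam := by
      rw [mul_pow, ← Real.rpow_natCast (lam ^ (-(1 : ℝ) / 2)) 2, ← Real.rpow_mul hlam.le]
      norm_num [Real.rpow_neg_one]
      field_simp
    rw [h1, mul_pow, sq (Real.exp _), ← Real.exp_add]
    set y : ℝ := (lam / 2) * x ^ 2 with hy
    have harg : -(lam / 4) * x ^ 2 + -(lam / 4) * x ^ 2 = -y := by rw [hy]; ring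
    rw [harg]
    have hy0 : 0 ≤ y := by positivity
    have hey : y ≤ Real.exp y := by linarith [Real.add_one_le_exp y]
    have hepos := Real.exp_pos y
    rw [Real.exp_neg]
    have hx2 : x ^ 2 = (2 / lam) * y := by rw [hy]; field_simp
    rw [hx2]
    calc (2 / lam) * y * (Real.exp y)⁻¹ ≤ (2 / lam) * Real.exp y * (Real.exp y)⁻¹ := by
          apply mul_le_mul_of_nonneg_right _ (by positivity)
          apply mul_le_mul_of_nonneg_left hey (by positivity)
      _ = 2 / lam := by field_simp
      _ ≤ 4 / lam := (div_le_div_iff_of_pos_right hlam).mpr (by norm_num)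
  nlinarith [hsq, ha, hb]

/-- Continuity estimate for the Boltzmann collision operator `|C⁰_{k,k+1}|`: if
`|g(Z_{k+1})| ≤ M exp(-λ H_{k+1})`, then
`(|C⁰_{k,k+1}| g)(Z_k) ≤ C_d λ^{-d/2} (k λ^{-1/2} + ∑ᵢ |vᵢ|) exp(-λ H_k) M`. -/
theorem boltzmann_collision_operator_continuity (d : ℕ) (hd : 2 ≤ d) :
    ∃ C > (0:ℝ), ∀ lam : ℝ, 0 < lam → ∀ k : ℕ, 1 ≤ k →
      ∀ (g : (Fin (k + 1) → Torus d × Vel d) → ℝ) (M : ℝ), 0 ≤ M →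
      (∀ Z : Fin (k + 1) → Torus d × Vel d,
        |g Z| ≤ M * Real.exp (-lam * kineticEnergy Z)) →
      ∀ Z : Fin k → Torus d × Vel d,
        (∑ i : Fin k, ∫ ν : Metric.sphere (0 : Vel d) 1, (∫ w : Vel d,
            (|g (adjoin Z i
                  ((Z i).2 + (inner ℝ (ν : Vel d) (w - (Z i).2) : ℝ) • (ν : Vel d))
                  (w - (inner ℝ (ν : Vel d) (w - (Z i).2) : ℝ) • (ν : Vel d)))| *
                max ((inner ℝ (w - (Z i).2) (ν : Vel d) : ℝ)) 0 +
              |g (adjoin Z i ((Z i).2) w)| *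
                max (-(inner ℝ (w - (Z i).2) (ν : Vel d) : ℝ)) 0))
          ∂((volume : Measure (Vel d)).toSphere)) ≤
        C * lam ^ (-(d : ℝ) / 2) * ((k : ℝ) * lam ^ (-(1 : ℝ) / 2) + ∑ i, ‖(Z i).2‖) *
          Real.exp (-lam * kineticEnergy Z) * M := by
  refine ⟨2 * (((volume : Measure (Vel d)).toSphere Set.univ).toReal + 1)
    * (4 * π) ^ ((d : ℝ) / 2), by positivity, ?_⟩
  intro lam hlam k hk g M hM hg Z
  set S : ℝ := ((volume : Measure (Vel d)).toSphere Set.univ).toReal with hSdef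
  have hS0 : 0 ≤ S := ENNReal.toReal_nonneg
  set L : ℝ := lam ^ (-(1 : ℝ) / 2) with hLdef
  have hL0 : 0 ≤ L := Real.rpow_nonneg hlam.le _
  set E : ℝ := Real.exp (-lam * kineticEnergy Z) with hEdef
  have hE0 : 0 < E := Real.exp_pos _
  set G : ℝ := (π / (lam / 4)) ^ ((d : ℝ) / 2) with hGdef
  have hG0 : 0 ≤ G := Real.rpow_nonneg (by positivity) _
  have hlam4 : (0 : ℝ) < lam / 4 := by positivity
  have hInt : Integrable (fun w : Vel d => Real.exp (-(lam / 4) * ‖w‖ ^ 2)) :=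
    gauss_integrable hlam4
  have hGval : ∫ w : Vel d, Real.exp (-(lam / 4) * ‖w‖ ^ 2) = G := gauss_value hlam4
  refine le_trans (Finset.sum_le_sum
    (fun i (_ : i ∈ Finset.univ) => ?_)
    : _ ≤ ∑ i : Fin k, S * (M * E * (2 * L + ‖(Z i).2‖) * G)) ?_
  · -- single-term bound
    set vi := (Z i).2 with hvi
    refine (integral_mono_of_nonneg (Filter.Eventually.of_forall fun ν => ?_)
      (integrable_const (M * E * (2 * L + ‖vi‖) * G))
      (Filter.Eventually.of_forall fun ν => ?_)).trans ?_
    · -- nonnegativity of inner integral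
      refine integral_nonneg fun w => ?_
      exact add_nonneg (mul_nonneg (abs_nonneg _) (le_max_right _ _))
        (mul_nonneg (abs_nonneg _) (le_max_right _ _))
    · -- inner integral bound
      have hν : ‖(ν : Vel d)‖ = 1 := by
        have := ν.2
        simpa using this
      refine le_trans (integral_mono_of_nonneg
        (Filter.Eventually.of_forall fun w => ?_)
        (hInt.const_mul (M * E * (2 * L + ‖vi‖)))
        (Filter.Eventually.of_forall fun w => ?_)) ?_
      · exact add_nonneg (mul_nonneg (abs_nonneg _) (le_max_right _ _))
          (mul_nonneg (abs_nonneg _) (le_max_right _ _))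
      · -- pointwise bound
        beta_reduce
        set t : ℝ := (inner ℝ (ν : Vel d) (w - vi) : ℝ) with htdef
        have ht' : (inner ℝ (w - vi) (ν : Vel d) : ℝ) = t := real_inner_comm _ _
        have hcons := energy_conservation vi w (ν : Vel d) hν
        rw [← htdef] at hcons
        have hke1 : kineticEnergy (adjoin Z i (vi + t • (ν : Vel d)) (w - t • (ν : Vel d)))
            = kineticEnergy Z + ‖w‖ ^ 2 / 2 := by
          rw [kE_adjoin]; rw [← hvi]; linarith
        have hke2 : kineticEnergy (adjoin Z i vi w) = kineticEnergy Z + ‖w‖ ^ 2 / 2 := by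
          rw [kE_adjoin]; rw [← hvi]; ring
        have hA := hg (adjoin Z i (vi + t • (ν : Vel d)) (w - t • (ν : Vel d)))
        rw [hke1] at hA
        have hB := hg (adjoin Z i vi w)
        rw [hke2] at hB
        set e4 : ℝ := Real.exp (-(lam / 4) * ‖w‖ ^ 2) with he4
        have he4pos : 0 < e4 := Real.exp_pos _
        have he41 : e4 ≤ 1 := by
          rw [he4, ← Real.exp_zero]
          exact Real.exp_le_exp.mpr (by nlinarith [sq_nonneg ‖w‖, hlam.le])
        have hsplit : Real.exp (-lam * (kineticEnergy Z + ‖w‖ ^ 2 / 2))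
            = E * (e4 * e4) := by
          rw [hEdef, he4, ← Real.exp_add, ← Real.exp_add]
          congr 1
          ring
        rw [hsplit] at hA hB
        have hxe : ‖w‖ * e4 ≤ 2 * L := by
          rw [he4, hLdef]
          exact xexp_bound hlam (norm_nonneg w)
        have habs : |t| ≤ ‖w‖ + ‖vi‖ := by
          calc |t| ≤ ‖(ν : Vel d)‖ * ‖w - vi‖ := by
                rw [htdef]; exact abs_real_inner_le_norm _ _
            _ = ‖w - vi‖ := by rw [hν, one_mul]
            _ ≤ ‖w‖ + ‖vi‖ := norm_sub_le _ _
        have hmax : max t 0 + max (-t) 0 = |t| := max_zero_add_max_neg_zero_eq_abs_self t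
        rw [ht']
        calc |g (adjoin Z i (vi + t • (ν : Vel d)) (w - t • (ν : Vel d)))| * max t 0
              + |g (adjoin Z i vi w)| * max (-t) 0
            ≤ M * (E * (e4 * e4)) * max t 0 + M * (E * (e4 * e4)) * max (-t) 0 := by
              refine add_le_add
                (mul_le_mul_of_nonneg_right hA (le_max_right _ _))
                (mul_le_mul_of_nonneg_right hB (le_max_right _ _))
          _ = M * (E * (e4 * e4)) * |t| := by rw [← mul_add, hmax]
          _ ≤ M * (E * (e4 * e4)) * (‖w‖ + ‖vi‖) := by
              refine mul_le_mul_of_nonneg_left habs (by positivity)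
          _ = M * E * ((‖w‖ * e4) * e4 + ‖vi‖ * (e4 * e4)) := by ring
          _ ≤ M * E * ((2 * L) * e4 + ‖vi‖ * e4) := by
              refine mul_le_mul_of_nonneg_left (add_le_add
                (mul_le_mul_of_nonneg_right hxe he4pos.le) ?_) (by positivity)
              calc ‖vi‖ * (e4 * e4) ≤ ‖vi‖ * (1 * e4) :=
                    mul_le_mul_of_nonneg_left
                      (mul_le_mul_of_nonneg_right he41 he4pos.le) (norm_nonneg vi)
                _ = ‖vi‖ * e4 := by ring
          _ = M * E * (2 * L + ‖vi‖) * e4 := by ring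
      · rw [integral_const_mul, hGval]
    · rw [integral_const, smul_eq_mul, measureReal_def, ← hSdef]
  · -- sum the bounds
    set T : ℝ := ∑ i, ‖(Z i).2‖ with hTdef
    have hT0 : 0 ≤ T := Finset.sum_nonneg fun i _ => norm_nonneg _
    have hk0 : (0 : ℝ) ≤ (k : ℝ) := Nat.cast_nonneg k
    have hGeq : G = (4 * π) ^ ((d : ℝ) / 2) * lam ^ (-(d : ℝ) / 2) := by
      rw [hGdef]
      have h1 : π / (lam / 4) = (4 * π) / lam := by field_simp
      rw [h1, Real.div_rpow (by positivity) hlam.le, neg_div,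
        Real.rpow_neg hlam.le, div_eq_mul_inv]
    have hsum : ∑ i : Fin k, S * (M * E * (2 * L + ‖(Z i).2‖) * G)
        = (k : ℝ) * (S * M * E * G * (2 * L)) + S * M * E * G * T := by
      calc ∑ i : Fin k, S * (M * E * (2 * L + ‖(Z i).2‖) * G)
          = ∑ i : Fin k, (S * M * E * G * (2 * L) + S * M * E * G * ‖(Z i).2‖) :=
            Finset.sum_congr rfl fun i _ => by ring
        _ = (k : ℝ) * (S * M * E * G * (2 * L)) + S * M * E * G * T := by
            rw [Finset.sum_add_distrib, Finset.sum_const, ← Finset.mul_sum,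
              Finset.card_univ, Fintype.card_fin, nsmul_eq_mul, hTdef]
    rw [hsum]
    have hcore : S * (2 * (k : ℝ) * L + T) ≤ 2 * (S + 1) * ((k : ℝ) * L + T) := by
      nlinarith [mul_nonneg hk0 hL0, hS0, hT0, mul_nonneg hS0 hT0,
        mul_nonneg hS0 (mul_nonneg hk0 hL0)]
    calc (k : ℝ) * (S * M * E * G * (2 * L)) + S * M * E * G * T
        = (S * (2 * (k : ℝ) * L + T)) * (M * E * G) := by ring
      _ ≤ (2 * (S + 1) * ((k : ℝ) * L + T)) * (M * E * G) :=
          mul_le_mul_of_nonneg_right hcore (by positivity)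
      _ = 2 * (S + 1) * (4 * π) ^ ((d : ℝ) / 2) * lam ^ (-(d : ℝ) / 2)
            * ((k : ℝ) * L + T) * E * M := by rw [hGeq]; ring

end
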